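/- arXiv:2504.04208 — 2 statements merged into one kernel-verified Lean document; each statement's English description precedes it below -/
import Mathlib

section
/- Let F₁, F₂ ∈ ℝ[x, y] be nonzero polynomials in two variables of degrees d₁ and d₂ respectively. If F₁ and F₂ have no common nonconstant factor (i.e., they are coprime in ℝ[x, y]), then the set of common zeros {(x, y) ∈ ℝ² : F₁(x, y) = 0 and F₂(x, y) = 0} has at most d₁·d₂ points. -/
set_option maxHeartbeats 1000000
set_option synthInstance.maxHeartbeats 400000

open MvPolynomial Finset Module

namespace BezoutPlaneAux

noncomputable section

/-- Sum of a `Fin 2`-finsupp. -/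
lemma degree_sum_eq (f : Fin 2 →₀ ℕ) : (f.sum fun _ e => e) = f 0 + f 1 := by
  rw [Finsupp.sum_fintype _ _ (fun _ => rfl), Fin.sum_univ_two]

lemma isHom_degree {p : MvPolynomial (Fin 2) ℝ} {n : ℕ} (h : p.IsHomogeneous n)
    {d : Fin 2 →₀ ℕ} (hc : coeff d p ≠ 0) : (d.sum fun _ e => e) = n := by
  have := h hc
  rw [Finsupp.weight_apply] at this
  rw [← this]
  exact Finsupp.sum_congr (fun i _ => by simp)

/-- The tail (below the top homogeneous component) has strictly smaller degree, or is zero. -/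
lemma tail_lt (p : MvPolynomial (Fin 2) ℝ) :
    p - homogeneousComponent p.totalDegree p = 0 ∨
      (p - homogeneousComponent p.totalDegree p).totalDegree < p.totalDegree := by
  set dp := p.totalDegree with hdp
  set t := p - homogeneousComponent dp p with ht
  by_cases h0 : t = 0
  · exact Or.inl h0
  right
  have hco : ∀ d : Fin 2 →₀ ℕ, coeff d t ≠ 0 → (d.sum fun _ e => e) < dp := by
    intro d hd
    rcases lt_trichotomy (d.sum fun _ e => e) dp with h | h | h
    · exact h
    · exfalso; apply hd
      rw [ht, coeff_sub, coeff_homogeneousComponent]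
      have hdd : (Finsupp.degree d) = dp := h
      rw [if_pos hdd, sub_self]
    · exfalso; apply hd
      have hz : coeff d p = 0 := coeff_eq_zero_of_totalDegree_lt h
      rw [ht, coeff_sub, coeff_homogeneousComponent]
      have hdd : ¬ (Finsupp.degree d) = dp := by
        intro he
        have he' : (d.sum fun _ e => e) = dp := he
        omega
      rw [if_neg hdd, hz, sub_zero]
  have hne : t.support.Nonempty := support_nonempty.mpr h0
  obtain ⟨d₀, hd₀⟩ := hne
  have hpos : 0 < dp := lt_of_le_of_lt (Nat.zero_le _) (hco d₀ (mem_support_iff.mp hd₀))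
  rw [totalDegree]
  exact Finset.sup_lt_iff (by simpa using hpos) |>.mpr
    fun d hd => hco d (mem_support_iff.mp hd)

/-- Total degree is additive on products of nonzero polynomials (over a domain). -/
lemma totalDegree_mul_eq {p q : MvPolynomial (Fin 2) ℝ} (hp : p ≠ 0) (hq : q ≠ 0) :
    (p * q).totalDegree = p.totalDegree + q.totalDegree := by
  refine le_antisymm (totalDegree_mul p q) ?_
  set dp := p.totalDegree with hdp
  set dq := q.totalDegree with hdq
  set lp := homogeneousComponent dp p with hlp
  set lq := homogeneousComponent dq q with hlq
  set tp := p - lp with htp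
  set tq := q - lq with htq
  have hlpne : lp ≠ 0 := by
    obtain ⟨d, hd, hdeg⟩ := Finset.exists_mem_eq_sup p.support (support_nonempty.mpr hp)
      (fun d => d.sum fun _ e => e)
    intro h0
    have hc : coeff d lp = coeff d p := by
      rw [hlp, coeff_homogeneousComponent, if_pos]
      exact (hdeg.symm : (d.sum fun _ e => e) = dp)
    rw [h0] at hc
    exact (mem_support_iff.mp hd) (by rw [← hc, coeff_zero])
  have hlqne : lq ≠ 0 := by
    obtain ⟨d, hd, hdeg⟩ := Finset.exists_mem_eq_sup q.support (support_nonempty.mpr hq)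
      (fun d => d.sum fun _ e => e)
    intro h0
    have hc : coeff d lq = coeff d q := by
      rw [hlq, coeff_homogeneousComponent, if_pos]
      exact (hdeg.symm : (d.sum fun _ e => e) = dq)
    rw [h0] at hc
    exact (mem_support_iff.mp hd) (by rw [← hc, coeff_zero])
  have hhom : (lp * lq).IsHomogeneous (dp + dq) :=
    (homogeneousComponent_isHomogeneous dp p).mul (homogeneousComponent_isHomogeneous dq q)
  have hprodne : lp * lq ≠ 0 := mul_ne_zero hlpne hlqne
  obtain ⟨D, hD⟩ := support_nonempty.mpr hprodne
  have hDdeg : (D.sum fun _ e => e) = dp + dq := isHom_degree hhom (mem_support_iff.mp hD)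
  -- auxiliary vanishing lemma
  have key : ∀ (u v : MvPolynomial (Fin 2) ℝ) (a b : ℕ), u.totalDegree ≤ a →
      (v = 0 ∨ v.totalDegree < b) → coeff D (u * v) = 0 → True := fun _ _ _ _ _ _ _ => trivial
  have kcz : ∀ (u v : MvPolynomial (Fin 2) ℝ) (a b : ℕ), u.totalDegree ≤ a →
      (v = 0 ∨ v.totalDegree < b) → a + b = dp + dq → coeff D (u * v) = 0 := by
    intro u v a b hu hv hab
    rcases hv with rfl | hv
    · simp
    · apply coeff_eq_zero_of_totalDegree_lt
      calc (u * v).totalDegree ≤ u.totalDegree + v.totalDegree := totalDegree_mul u v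
        _ < a + b := by omega
        _ = (D.sum fun _ e => e) := by rw [hDdeg, hab]
  have hlpd : lp.totalDegree ≤ dp := (homogeneousComponent_isHomogeneous dp p).totalDegree_le
  have hlqd : lq.totalDegree ≤ dq := (homogeneousComponent_isHomogeneous dq q).totalDegree_le
  have htpd : tp.totalDegree ≤ dp := by
    rcases tail_lt p with h | h
    · rw [← hdp, ← hlp, ← htp] at h; rw [h]; simp
    · rw [← hdp, ← hlp, ← htp] at h; omega
  have htail_p : tp = 0 ∨ tp.totalDegree < dp := by
    rcases tail_lt p with h | h
    · left; rw [← hdp, ← hlp, ← htp] at h; exact h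
    · right; rw [← hdp, ← hlp, ← htp] at h; exact h
  have htail_q : tq = 0 ∨ tq.totalDegree < dq := by
    rcases tail_lt q with h | h
    · left; rw [← hdq, ← hlq, ← htq] at h; exact h
    · right; rw [← hdq, ← hlq, ← htq] at h; exact h
  have hsplit : p * q = lp * lq + (lp * tq + tp * lq + tp * tq) := by
    rw [htp, htq]; ring
  have hz1 : coeff D (lp * tq) = 0 := kcz lp tq dp dq hlpd htail_q rfl
  have hz2 : coeff D (tp * lq) = 0 := by
    rw [mul_comm]
    exact kcz lq tp dq dp hlqd htail_p (by omega)
  have hz3 : coeff D (tp * tq) = 0 := kcz tp tq dp dq htpd htail_q rfl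
  have hcD : coeff D (p * q) = coeff D (lp * lq) := by
    rw [hsplit, coeff_add, coeff_add, coeff_add, hz1, hz2, hz3]; ring
  have hne : coeff D (p * q) ≠ 0 := by rw [hcD]; exact mem_support_iff.mp hD
  calc dp + dq = (D.sum fun _ e => e) := hDdeg.symm
    _ ≤ (p * q).totalDegree := le_totalDegree (mem_support_iff.mpr hne)

/-- Dimension of the space of polynomials of total degree at most `m` in two variables. -/
lemma finrank_restrict (m : ℕ) :
    2 * finrank ℝ ↥(restrictTotalDegree (Fin 2) ℝ m) = (m + 1) * (m + 2) := by
  classical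
  set s : Set (Fin 2 →₀ ℕ) := {n | (n.sum fun _ e => e) ≤ m} with hs
  set F : Finset (ℕ × ℕ) := (range (m + 1)).biUnion Finset.HasAntidiagonal.antidiagonal with hF
  have hmemF : ∀ p : ℕ × ℕ, p ∈ F ↔ p.1 + p.2 ≤ m := by
    intro p
    simp only [hF, Finset.mem_biUnion, Finset.mem_range, Finset.HasAntidiagonal.mem_antidiagonal]
    exact ⟨fun ⟨k, hk, he⟩ => by omega, fun h => ⟨p.1 + p.2, by omega, rfl⟩⟩
  have e : s ≃ ↥F :=
    { toFun := fun f => ⟨(f.1 0, f.1 1), (hmemF _).mpr (by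
        have h2 : ((f : Fin 2 →₀ ℕ).sum fun _ e => e) ≤ m := f.2
        rw [degree_sum_eq] at h2
        exact h2)⟩
      invFun := fun p => ⟨Finsupp.single 0 p.1.1 + Finsupp.single 1 p.1.2, by
        rw [hs, Set.mem_setOf_eq, degree_sum_eq]
        have := (hmemF _).mp p.2
        simpa using this⟩
      left_inv := fun f => by
        apply Subtype.ext
        ext i
        fin_cases i <;> simp
      right_inv := fun p => by
        apply Subtype.ext
        apply Prod.ext <;> simp }
  haveI : Fintype s := Fintype.ofEquiv ↥F e.symm
  have hrank : finrank ℝ ↥(restrictTotalDegree (Fin 2) ℝ m) = Fintype.card s :=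
    finrank_eq_card_basis (basisRestrictSupport ℝ s)
  have hcard : Fintype.card s = F.card := (Fintype.card_congr e).trans (Fintype.card_coe F)
  have hFcard : F.card = ∑ k ∈ range (m + 1), (k + 1) := by
    rw [hF, Finset.card_biUnion]
    · exact Finset.sum_congr rfl fun k _ => Nat.card_antidiagonal k
    · intro k hk l hl hkl
      rw [Function.onFun, Finset.disjoint_left]
      rintro ⟨a, b⟩ ha hb
      rw [Finset.HasAntidiagonal.mem_antidiagonal] at ha hb
      exact hkl (ha ▸ hb)
  have hshift : ∑ i ∈ range (m + 2), i = ∑ k ∈ range (m + 1), (k + 1) := by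
    rw [Finset.sum_range_succ']
    simp
  have hg := Finset.sum_range_id_mul_two (m + 2)
  have hsub : (m + 2) - 1 = m + 1 := rfl
  rw [hsub] at hg
  rw [hrank, hcard, hFcard, ← hshift]
  calc 2 * ∑ i ∈ range (m + 2), i = (∑ i ∈ range (m + 2), i) * 2 := by ring
    _ = (m + 2) * (m + 1) := hg
    _ = (m + 1) * (m + 2) := by ring

/-- Interpolation: a polynomial separating one point of a finite set from the rest. -/
lemma interp (T : Finset (Fin 2 → ℝ)) (p : Fin 2 → ℝ) (hp : p ∈ T) :
    ∃ g : MvPolynomial (Fin 2) ℝ, g.totalDegree ≤ T.card - 1 ∧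
      eval p g ≠ 0 ∧ ∀ q ∈ T, q ≠ p → eval q g = 0 := by
  classical
  set idx : (Fin 2 → ℝ) → Fin 2 := fun q => if q 0 = p 0 then 1 else 0 with hidx
  have hidxne : ∀ q : Fin 2 → ℝ, q ≠ p → q (idx q) ≠ p (idx q) := by
    intro q hq
    by_cases h0 : q 0 = p 0
    · simp only [hidx, if_pos h0]
      intro h1
      apply hq
      funext i
      fin_cases i
      · exact h0
      · exact h1
    · simpa only [hidx, if_neg h0] using h0
  refine ⟨∏ q ∈ T.erase p, (X (idx q) - C (q (idx q))), ?_, ?_, ?_⟩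
  · refine le_trans (totalDegree_finset_prod _ _) ?_
    have hone : ∀ q ∈ T.erase p, (X (idx q) - C (q (idx q)) : MvPolynomial (Fin 2) ℝ).totalDegree ≤ 1 := by
      intro q hq
      refine le_trans (totalDegree_sub _ _) ?_
      simp [totalDegree_X, totalDegree_C]
    calc ∑ q ∈ T.erase p, (X (idx q) - C (q (idx q)) : MvPolynomial (Fin 2) ℝ).totalDegree
        ≤ ∑ q ∈ T.erase p, 1 := Finset.sum_le_sum hone
      _ = (T.erase p).card := by simp
      _ ≤ T.card - 1 := by rw [Finset.card_erase_of_mem hp]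
  · rw [map_prod]
    apply Finset.prod_ne_zero_iff.mpr
    intro q hq
    simp only [map_sub, eval_X, eval_C]
    exact sub_ne_zero.mpr (fun h => hidxne q (Finset.ne_of_mem_erase hq) h.symm)
  · intro q hq hqp
    rw [map_prod]
    apply Finset.prod_eq_zero (Finset.mem_erase.mpr ⟨hqp, hq⟩)
    simp

/-- Key: any finite set of common zeros has at most `d₁ * d₂` elements. -/
lemma key_card (F₁ F₂ : MvPolynomial (Fin 2) ℝ) (d₁ d₂ : ℕ)
    (hF₁ : F₁ ≠ 0) (hF₂ : F₂ ≠ 0)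
    (hd₁ : F₁.totalDegree = d₁) (hd₂ : F₂.totalDegree = d₂)
    (hcop : ∀ g : MvPolynomial (Fin 2) ℝ, g ∣ F₁ → g ∣ F₂ → IsUnit g)
    (T : Finset (Fin 2 → ℝ))
    (hT : ∀ x ∈ T, eval x F₁ = 0 ∧ eval x F₂ = 0) : T.card ≤ d₁ * d₂ := by
  classical
  by_contra hlt
  push_neg at hlt
  obtain ⟨T', hT'sub, hT'card⟩ := T.exists_subset_card_eq (n := d₁ * d₂ + 1) (by omega)
  have hT' : ∀ x ∈ T', eval x F₁ = 0 ∧ eval x F₂ = 0 := fun x hx => hT x (hT'sub hx)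
  clear hT hT'sub hlt
  set P : ℕ → Submodule ℝ (MvPolynomial (Fin 2) ℝ) := fun m => restrictTotalDegree (Fin 2) ℝ m
    with hP
  have hmemP : ∀ (m : ℕ) (f : MvPolynomial (Fin 2) ℝ), f ∈ P m ↔ f.totalDegree ≤ m :=
    fun m f => mem_restrictTotalDegree _ _ f
  -- multiplication maps
  have hinj : ∀ G : MvPolynomial (Fin 2) ℝ, G ≠ 0 →
      Function.Injective (LinearMap.mulLeft ℝ G) := by
    intro G hG a b h
    simp only [LinearMap.mulLeft_apply] at h
    exact mul_left_cancel₀ hG h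
  set A : Submodule ℝ (MvPolynomial (Fin 2) ℝ) :=
    Submodule.map (LinearMap.mulLeft ℝ F₁) (P (d₂ + d₁ * d₂)) with hA
  set B : Submodule ℝ (MvPolynomial (Fin 2) ℝ) :=
    Submodule.map (LinearMap.mulLeft ℝ F₂) (P (d₁ + d₁ * d₂)) with hB
  set C0 : Submodule ℝ (MvPolynomial (Fin 2) ℝ) :=
    Submodule.map (LinearMap.mulLeft ℝ (F₁ * F₂)) (P (d₁ * d₂)) with hC0
  haveI : FiniteDimensional ℝ ↥A :=
    Module.Finite.equiv (Submodule.equivMapOfInjective _ (hinj F₁ hF₁) (P (d₂ + d₁ * d₂)))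
  haveI : FiniteDimensional ℝ ↥B :=
    Module.Finite.equiv (Submodule.equivMapOfInjective _ (hinj F₂ hF₂) (P (d₁ + d₁ * d₂)))
  haveI : FiniteDimensional ℝ ↥C0 :=
    Module.Finite.equiv (Submodule.equivMapOfInjective _ (hinj _ (mul_ne_zero hF₁ hF₂))
      (P (d₁ * d₂)))
  have hAr : finrank ℝ ↥A = finrank ℝ ↥(P (d₂ + d₁ * d₂)) :=
    ((Submodule.equivMapOfInjective _ (hinj F₁ hF₁) (P (d₂ + d₁ * d₂))).finrank_eq).symm
  have hBr : finrank ℝ ↥B = finrank ℝ ↥(P (d₁ + d₁ * d₂)) :=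
    ((Submodule.equivMapOfInjective _ (hinj F₂ hF₂) (P (d₁ + d₁ * d₂))).finrank_eq).symm
  have hC0r : finrank ℝ ↥C0 = finrank ℝ ↥(P (d₁ * d₂)) :=
    ((Submodule.equivMapOfInjective _ (hinj _ (mul_ne_zero hF₁ hF₂)) (P (d₁ * d₂))).finrank_eq).symm
  -- A ⊔ B sits inside P (d₁ + d₂ + d₁ * d₂)
  have hA_le : A ≤ P (d₁ + d₂ + d₁ * d₂) := by
    rintro x ⟨a, ha, rfl⟩
    have ha' : a.totalDegree ≤ d₂ + d₁ * d₂ := (hmemP _ _).mp ha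
    refine (hmemP _ _).mpr ?_
    simp only [LinearMap.mulLeft_apply]
    calc (F₁ * a).totalDegree ≤ F₁.totalDegree + a.totalDegree := totalDegree_mul _ _
      _ ≤ d₁ + d₂ + d₁ * d₂ := by omega
  have hB_le : B ≤ P (d₁ + d₂ + d₁ * d₂) := by
    rintro x ⟨b, hb, rfl⟩
    have hb' : b.totalDegree ≤ d₁ + d₁ * d₂ := (hmemP _ _).mp hb
    refine (hmemP _ _).mpr ?_
    simp only [LinearMap.mulLeft_apply]
    calc (F₂ * b).totalDegree ≤ F₂.totalDegree + b.totalDegree := totalDegree_mul _ _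
      _ ≤ d₁ + d₂ + d₁ * d₂ := by omega
  have hW_le : A ⊔ B ≤ P (d₁ + d₂ + d₁ * d₂) := sup_le hA_le hB_le
  -- A ⊓ B is contained in C0 (via coprimality)
  have hinf_le : A ⊓ B ≤ C0 := by
    rintro x ⟨⟨a, ha, hax⟩, ⟨b, hb, hbx⟩⟩
    simp only [LinearMap.mulLeft_apply] at hax hbx
    by_cases ha0 : a = 0
    · have : x = 0 := by rw [← hax, ha0, mul_zero]
      rw [this]; exact C0.zero_mem
    have hrp : IsRelPrime F₂ F₁ := fun g h2 h1 => hcop g h1 h2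
    have hdvd : F₂ ∣ a := by
      apply hrp.dvd_of_dvd_mul_right (y := a)
      exact ⟨b, by rw [mul_comm a F₁, hax, ← hbx, mul_comm]⟩
    obtain ⟨c, hc⟩ := hdvd
    have hc0 : c ≠ 0 := by rintro rfl; exact ha0 (by rw [hc, mul_zero])
    have hdeg : c.totalDegree ≤ d₁ * d₂ := by
      have heq := totalDegree_mul_eq hF₂ hc0
      rw [← hc, hd₂] at heq
      have ha' : a.totalDegree ≤ d₂ + d₁ * d₂ := (hmemP _ _).mp ha
      omega
    refine ⟨c, (hmemP _ _).mpr hdeg, ?_⟩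
    simp only [LinearMap.mulLeft_apply]
    rw [← hax, hc]; ring
  have hinfr : finrank ℝ ↥(A ⊓ B) ≤ finrank ℝ ↥(P (d₁ * d₂)) := by
    rw [← hC0r]
    exact Submodule.finrank_mono hinf_le
  have hsup := Submodule.finrank_sup_add_finrank_inf_eq A B
  -- evaluation map
  set E : MvPolynomial (Fin 2) ℝ →ₗ[ℝ] ({x // x ∈ T'} → ℝ) :=
    LinearMap.pi fun q => (aeval (q : Fin 2 → ℝ)).toLinearMap with hE
  have hEapp : ∀ (f : MvPolynomial (Fin 2) ℝ) (q : {x // x ∈ T'}),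
      E f q = eval (q : Fin 2 → ℝ) f := by
    intro f q
    simp [hE, MvPolynomial.aeval_def, MvPolynomial.eval₂_id]
  set E' : ↥(P (d₁ + d₂ + d₁ * d₂)) →ₗ[ℝ] ({x // x ∈ T'} → ℝ) := E.comp (P (d₁ + d₂ + d₁ * d₂)).subtype with hE'
  -- E' is surjective, by interpolation
  have hsurj : Function.Surjective E' := by
    intro v
    choose g hgdeg hgp hgq using fun q : {x // x ∈ T'} => interp T' (q : Fin 2 → ℝ) q.2
    have hgmem : ∀ q : {x // x ∈ T'}, g q ∈ P (d₁ + d₂ + d₁ * d₂) := by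
      intro q
      refine (hmemP _ _).mpr (le_trans (hgdeg q) ?_)
      rw [hT'card]
      omega
    set w : ↥(P (d₁ + d₂ + d₁ * d₂)) :=
      ⟨∑ q : {x // x ∈ T'}, (v q * (eval (q : Fin 2 → ℝ) (g q))⁻¹) • g q,
        Submodule.sum_mem _ fun q _ => Submodule.smul_mem _ _ (hgmem q)⟩ with hw
    refine ⟨w, ?_⟩
    funext q₀
    have hkey : E' w q₀ =
        ∑ q : {x // x ∈ T'}, (v q * (eval (q : Fin 2 → ℝ) (g q))⁻¹) * eval (q₀ : Fin 2 → ℝ) (g q) := by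
      rw [hE', LinearMap.comp_apply]
      have hco : (P (d₁ + d₂ + d₁ * d₂)).subtype w =
          ∑ q : {x // x ∈ T'}, (v q * (eval (q : Fin 2 → ℝ) (g q))⁻¹) • g q := rfl
      rw [hco, map_sum, Finset.sum_apply]
      congr 1
      funext q
      rw [map_smul]
      simp only [Pi.smul_apply, smul_eq_mul]
      rw [hEapp]
    rw [hkey]
    rw [Finset.sum_eq_single q₀]
    · rw [mul_assoc, inv_mul_cancel₀ (hgp q₀), mul_one]
    · intro q _ hq
      have hne : (q₀ : Fin 2 → ℝ) ≠ (q : Fin 2 → ℝ) :=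
        fun h => hq (Subtype.ext h).symm
      rw [hgq q (q₀ : Fin 2 → ℝ) q₀.2 hne, mul_zero]
    · intro h
      exact absurd (Finset.mem_univ q₀) h
  have hrn := LinearMap.finrank_range_add_finrank_ker E'
  have hrange : finrank ℝ ↥(LinearMap.range E') = d₁ * d₂ + 1 := by
    rw [LinearMap.range_eq_top.mpr hsurj, finrank_top, Module.finrank_pi, Fintype.card_coe,
      hT'card]
  -- A ⊔ B is inside the kernel
  have hWker : Submodule.comap (P (d₁ + d₂ + d₁ * d₂)).subtype (A ⊔ B) ≤ LinearMap.ker E' := by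
    intro x hx
    rw [Submodule.mem_comap] at hx
    have hxx : (x : MvPolynomial (Fin 2) ℝ) ∈ A ⊔ B := hx
    obtain ⟨y, hy, z, hz, hyz⟩ := Submodule.mem_sup.mp hxx
    obtain ⟨a, _, ha⟩ := hy
    obtain ⟨b, _, hb⟩ := hz
    rw [LinearMap.mem_ker]
    funext q
    show E' x q = 0
    have happ : E' x q = eval (q : Fin 2 → ℝ) (x : MvPolynomial (Fin 2) ℝ) := by
      rw [hE', LinearMap.comp_apply]
      exact hEapp _ q
    rw [happ, ← hyz, ← ha, ← hb]
    simp only [LinearMap.mulLeft_apply, map_add, map_mul]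
    rw [(hT' q q.2).1, (hT' q q.2).2]
    ring
  have hWfr : finrank ℝ ↥(A ⊔ B) ≤ finrank ℝ ↥(LinearMap.ker E') := by
    have hq1 : finrank ℝ ↥(Submodule.comap (P (d₁ + d₂ + d₁ * d₂)).subtype (A ⊔ B)) =
        finrank ℝ ↥(A ⊔ B) :=
      LinearEquiv.finrank_eq (Submodule.comapSubtypeEquivOfLe hW_le)
    rw [← hq1]
    exact Submodule.finrank_mono hWker
  -- put everything together
  have hcomb : finrank ℝ ↥(P (d₂ + d₁ * d₂)) + finrank ℝ ↥(P (d₁ + d₁ * d₂)) + (d₁ * d₂ + 1)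
      ≤ finrank ℝ ↥(P (d₁ + d₂ + d₁ * d₂)) + finrank ℝ ↥(P (d₁ * d₂)) := by omega
  have h1 : 2 * finrank ℝ ↥(P (d₂ + d₁ * d₂)) = (d₂ + d₁ * d₂ + 1) * (d₂ + d₁ * d₂ + 2) :=
    finrank_restrict (d₂ + d₁ * d₂)
  have h2 : 2 * finrank ℝ ↥(P (d₁ + d₁ * d₂)) = (d₁ + d₁ * d₂ + 1) * (d₁ + d₁ * d₂ + 2) :=
    finrank_restrict (d₁ + d₁ * d₂)
  have h0 : 2 * finrank ℝ ↥(P (d₁ * d₂)) = (d₁ * d₂ + 1) * (d₁ * d₂ + 2) :=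
    finrank_restrict (d₁ * d₂)
  have hnn : 2 * finrank ℝ ↥(P (d₁ + d₂ + d₁ * d₂)) =
      (d₁ + d₂ + d₁ * d₂ + 1) * (d₁ + d₂ + d₁ * d₂ + 2) :=
    finrank_restrict (d₁ + d₂ + d₁ * d₂)
  have hcomb2 : 2 * finrank ℝ ↥(P (d₂ + d₁ * d₂)) + 2 * finrank ℝ ↥(P (d₁ + d₁ * d₂))
      + 2 * (d₁ * d₂ + 1) ≤ 2 * finrank ℝ ↥(P (d₁ + d₂ + d₁ * d₂)) + 2 * finrank ℝ ↥(P (d₁ * d₂)) := by omega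
  rw [h1, h2, h0, hnn] at hcomb2
  have hid : (d₂ + d₁ * d₂ + 1) * (d₂ + d₁ * d₂ + 2) + (d₁ + d₁ * d₂ + 1) * (d₁ + d₁ * d₂ + 2)
      + 2 * (d₁ * d₂) = (d₁ + d₂ + d₁ * d₂ + 1) * (d₁ + d₂ + d₁ * d₂ + 2)
      + (d₁ * d₂ + 1) * (d₁ * d₂ + 2) := by ring
  linarith

end

end BezoutPlaneAux

/-- Bézout's theorem for plane curves: if `F₁, F₂ ∈ ℝ[x,y]` are nonzero
polynomials of degrees `d₁, d₂` with no common nonconstant factor, then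
they have at most `d₁·d₂` common zeros in `ℝ²`. -/
theorem bezout_plane (F₁ F₂ : MvPolynomial (Fin 2) ℝ) (d₁ d₂ : ℕ)
    (hF₁ : F₁ ≠ 0) (hF₂ : F₂ ≠ 0)
    (hd₁ : F₁.totalDegree = d₁) (hd₂ : F₂.totalDegree = d₂)
    (hcop : ∀ g : MvPolynomial (Fin 2) ℝ, g ∣ F₁ → g ∣ F₂ → IsUnit g) :
    ({x : Fin 2 → ℝ | MvPolynomial.eval x F₁ = 0 ∧
        MvPolynomial.eval x F₂ = 0}).Finite ∧
    ({x : Fin 2 → ℝ | MvPolynomial.eval x F₁ = 0 ∧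
        MvPolynomial.eval x F₂ = 0}).ncard ≤ d₁ * d₂ := by
  set S := {x : Fin 2 → ℝ | MvPolynomial.eval x F₁ = 0 ∧ MvPolynomial.eval x F₂ = 0} with hS
  have key : ∀ T : Finset (Fin 2 → ℝ), ↑T ⊆ S → T.card ≤ d₁ * d₂ := by
    intro T hsub
    exact BezoutPlaneAux.key_card F₁ F₂ d₁ d₂ hF₁ hF₂ hd₁ hd₂ hcop T fun x hx => hsub hx
  have hfin : S.Finite := by
    by_contra hinf
    have hinf' : S.Infinite := hinf
    obtain ⟨T, hTs, hTc⟩ := hinf'.exists_subset_card_eq (d₁ * d₂ + 1)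
    have := key T hTs
    omega
  refine ⟨hfin, ?_⟩
  rw [Set.ncard_eq_toFinset_card S hfin]
  exact key hfin.toFinset (by simp)
end

section
/- For all constants c, c' > 0 there exist constants δ > 0 and K > 0 such that the following holds: if G is an abelian group, A ⊆ G is a finite nonempty set, and H ⊆ A × A satisfies |H| ≥ c·|A|² and |A −_H A| ≤ c'·|A|, then there exists a subset A' ⊆ A with |A'| ≥ δ·|A| and |A' − A'| ≤ K·|A'|. -/
set_option maxHeartbeats 4000000

open scoped Classical Pointwise
open Finset

private lemma bsg_cardf {α : Type*} (s : Finset α) (p : α → Prop) [DecidablePred p] :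
    ((s.filter p).card : ℝ) = ∑ x ∈ s, if p x then (1 : ℝ) else 0 := by
  rw [card_filter]
  push_cast
  exact Finset.sum_congr rfl fun x _ => by split_ifs <;> simp

private lemma bsg_cardf2 {α β : Type*} (s : Finset α) (t : Finset β) (p : α → β → Prop)
    [∀ x y, Decidable (p x y)] :
    (((s ×ˢ t).filter (fun q => p q.1 q.2)).card : ℝ)
      = ∑ x ∈ s, ∑ y ∈ t, if p x y then (1 : ℝ) else 0 := by
  rw [card_filter]
  push_cast
  rw [Finset.sum_product]

private lemma bsg_swap {α β : Type*} (s : Finset α) (t : Finset β) (p : α → β → Prop)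
    [∀ x y, Decidable (p x y)] :
    ∑ y ∈ t, ((s.filter (fun x => p x y)).card : ℝ)
      = ∑ x ∈ s, ((t.filter (fun y => p x y)).card : ℝ) := by
  calc ∑ y ∈ t, ((s.filter (fun x => p x y)).card : ℝ)
      = ∑ y ∈ t, ∑ x ∈ s, if p x y then (1 : ℝ) else 0 :=
        Finset.sum_congr rfl fun y _ => bsg_cardf _ _
    _ = ∑ x ∈ s, ∑ y ∈ t, if p x y then (1 : ℝ) else 0 := Finset.sum_comm
    _ = _ := Finset.sum_congr rfl fun x _ => (bsg_cardf _ _).symm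

private lemma bsg_fiber_sum {α β : Type*} [DecidableEq β] (T : Finset α) (S : Finset β)
    (f : α → β) :
    ∑ d ∈ S, ((T.filter (fun t => f t = d)).card : ℝ) ≤ (T.card : ℝ) := by
  have h1 : (T.filter (fun t => f t ∈ S)).card
      = ∑ d ∈ S, ((T.filter (fun t => f t ∈ S)).filter (fun t => f t = d)).card :=
    card_eq_sum_card_fiberwise (fun t ht => (mem_filter.1 ht).2)
  have h2 : ∀ d ∈ S, (T.filter (fun t => f t ∈ S)).filter (fun t => f t = d)
      = T.filter (fun t => f t = d) := by
    intro d hd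
    ext t
    simp only [mem_filter, and_assoc]
    constructor
    · rintro ⟨ht, -, h3⟩; exact ⟨ht, h3⟩
    · rintro ⟨ht, h3⟩; exact ⟨ht, h3 ▸ hd, h3⟩
  have h3 : ∑ d ∈ S, ((T.filter (fun t => f t = d)).card : ℝ)
      = ((T.filter (fun t => f t ∈ S)).card : ℝ) := by
    rw [h1]
    push_cast
    exact Finset.sum_congr rfl fun d hd => by rw [h2 d hd]
  rw [h3]
  exact_mod_cast Nat.cast_le.mpr (card_filter_le _ _)

private lemma bsg_filter_and {α : Type*} (s : Finset α) (p q : α → Prop)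
    [DecidablePred p] [DecidablePred q] :
    (s.filter p).card
      ≤ (s.filter (fun x => p x ∧ q x)).card + (s.filter (fun x => ¬ q x)).card := by
  refine le_trans (card_le_card ?_) (card_union_le _ _)
  intro x hx
  rw [mem_union, mem_filter, mem_filter]
  rcases mem_filter.1 hx with ⟨hxs, hpx⟩
  by_cases hq : q x
  · exact Or.inl ⟨hxs, hpx, hq⟩
  · exact Or.inr ⟨hxs, hq⟩

/-- The Balog–Szemerédi–Gowers theorem: if `H ⊆ A × A` has `|H| ≥ c·|A|²` and
the restricted difference set `A −_H A` has size at most `c'·|A|`, then some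
subset `A' ⊆ A` with `|A'| ≥ δ·|A|` satisfies `|A' − A'| ≤ K·|A'|`. -/
theorem balog_szemeredi_gowers (c c' : ℝ) (hc : 0 < c) (hc' : 0 < c') :
    ∃ δ K : ℝ, 0 < δ ∧ 0 < K ∧
      ∀ (G : Type) [AddCommGroup G],
        ∀ (A : Finset G), A.Nonempty →
          ∀ (H : Finset (G × G)), ↑H ⊆ (A ×ˢ A : Finset (G × G)) →
            c * (A.card : ℝ) ^ 2 ≤ (H.card : ℝ) →
            ((H.image (fun p => p.1 - p.2)).card : ℝ) ≤ c' * (A.card : ℝ) →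
            ∃ A' : Finset G, A' ⊆ A ∧
              δ * (A.card : ℝ) ≤ (A'.card : ℝ) ∧
              ((A' - A').card : ℝ) ≤ K * (A'.card : ℝ) := by
  refine ⟨c / 8, 2 ^ 33 * c' ^ 6 / c ^ 12, by positivity, by positivity, ?_⟩
  intro G _ A hA H hHsub hHcard hDcard
  have hH : H ⊆ A ×ˢ A := fun p hp => by exact_mod_cast hHsub hp
  set n : ℝ := (A.card : ℝ) with hn
  have hn0 : (0 : ℝ) < n := by rw [hn]; exact_mod_cast hA.card_pos
  -- |H| = Σ_{a ∈ A} deg a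
  have hHsum : (H.card : ℝ) = ∑ a ∈ A, ((A.filter (fun b => (a, b) ∈ H)).card : ℝ) := by
    have h1 : H = (A ×ˢ A).filter (fun p => (p.1, p.2) ∈ H) := by
      ext p
      simp only [mem_filter]
      exact ⟨fun h => ⟨hH h, h⟩, fun h => h.2⟩
    calc (H.card : ℝ) = (((A ×ˢ A).filter (fun p => (p.1, p.2) ∈ H)).card : ℝ) := by rw [← h1]
      _ = ∑ q ∈ A ×ˢ A, if (q.1, q.2) ∈ H then (1 : ℝ) else 0 := bsg_cardf _ _
      _ = ∑ a ∈ A, ∑ b ∈ A, if (a, b) ∈ H then (1 : ℝ) else 0 := by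
          rw [Finset.sum_product]
      _ = _ := Finset.sum_congr rfl fun a _ => (bsg_cardf _ _).symm
  -- sum of degrees over the high-degree part Abar
  have hSAbar : c * n ^ 2 / 2
      ≤ ∑ a ∈ A.filter (fun a => c * n / 2 ≤ ((A.filter (fun b => (a, b) ∈ H)).card : ℝ)),
          ((A.filter (fun b => (a, b) ∈ H)).card : ℝ) := by
    have hsplit := Finset.sum_filter_add_sum_filter_not A
      (fun a => c * n / 2 ≤ ((A.filter (fun b => (a, b) ∈ H)).card : ℝ))
      (fun a => ((A.filter (fun b => (a, b) ∈ H)).card : ℝ))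
    have hsmall : ∑ a ∈ A.filter
        (fun a => ¬ c * n / 2 ≤ ((A.filter (fun b => (a, b) ∈ H)).card : ℝ)),
        ((A.filter (fun b => (a, b) ∈ H)).card : ℝ) ≤ n * (c * n / 2) := by
      have h1 := Finset.sum_le_card_nsmul
        (A.filter (fun a => ¬ c * n / 2 ≤ ((A.filter (fun b => (a, b) ∈ H)).card : ℝ)))
        (fun a => ((A.filter (fun b => (a, b) ∈ H)).card : ℝ)) (c * n / 2)
        (fun x hx => le_of_not_ge (mem_filter.1 hx).2)
      rw [nsmul_eq_mul] at h1
      refine h1.trans ?_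
      have h2 : ((A.filter
          (fun a => ¬ c * n / 2 ≤ ((A.filter (fun b => (a, b) ∈ H)).card : ℝ))).card : ℝ) ≤ n := by
        rw [hn]; exact_mod_cast Nat.cast_le.mpr (card_le_card (filter_subset _ _))
      nlinarith [h2, mul_pos hc hn0]
    rw [← hHsum] at hsplit
    linarith [hsplit, hsmall, hHcard]
  set Abar : Finset G :=
    A.filter (fun a => c * n / 2 ≤ ((A.filter (fun b => (a, b) ∈ H)).card : ℝ)) with hAbardef
  have hAbarA : Abar ⊆ A := filter_subset _ _
  have hAbarn : (Abar.card : ℝ) ≤ n := by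
    rw [hn]; exact_mod_cast Nat.cast_le.mpr (card_le_card hAbarA)
  have hAbar_deg : ∀ a ∈ Abar, c * n / 2 ≤ ((A.filter (fun b => (a, b) ∈ H)).card : ℝ) :=
    fun a ha => (mem_filter.1 ha).2
  clear_value Abar
  -- Σ_b |U b| ≥ c n² / 2
  have hUsum : c * n ^ 2 / 2 ≤ ∑ b ∈ A, ((Abar.filter (fun a => (a, b) ∈ H)).card : ℝ) := by
    rw [bsg_swap Abar A (fun a b => (a, b) ∈ H)]
    exact hSAbar
  set τ : ℝ := c ^ 3 * n / 256 with hτdef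
  have hτ0 : 0 < τ := by rw [hτdef]; positivity
  clear_value τ
  -- the bad-pairs weight
  have hbp_step1 : ∀ b : G,
      ∑ a ∈ Abar.filter (fun a => (a, b) ∈ H),
        ((Abar.filter (fun a' => (a', b) ∈ H ∧
            ((A.filter (fun b₁ => (a, b₁) ∈ H ∧ (a', b₁) ∈ H)).card : ℝ) < τ)).card : ℝ)
      = ∑ a ∈ Abar, ∑ a' ∈ Abar,
          if ((a, b) ∈ H ∧ (a', b) ∈ H) ∧
              ((A.filter (fun b₁ => (a, b₁) ∈ H ∧ (a', b₁) ∈ H)).card : ℝ) < τ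
          then (1 : ℝ) else 0 := by
    intro b
    rw [Finset.sum_filter]
    refine Finset.sum_congr rfl fun a _ => ?_
    by_cases hab : (a, b) ∈ H
    · rw [if_pos hab, bsg_cardf]
      refine Finset.sum_congr rfl fun a' _ => ?_
      simp only [hab, true_and]
    · rw [if_neg hab]
      symm
      refine Finset.sum_eq_zero fun a' _ => ?_
      rw [if_neg]
      tauto
  have hbp_sum : ∑ b ∈ A, ∑ a ∈ Abar.filter (fun a => (a, b) ∈ H),
        ((Abar.filter (fun a' => (a', b) ∈ H ∧
            ((A.filter (fun b₁ => (a, b₁) ∈ H ∧ (a', b₁) ∈ H)).card : ℝ) < τ)).card : ℝ)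
      ≤ τ * n ^ 2 := by
    have e1 : ∑ b ∈ A, ∑ a ∈ Abar, ∑ a' ∈ Abar,
          (if ((a, b) ∈ H ∧ (a', b) ∈ H) ∧
              ((A.filter (fun b₁ => (a, b₁) ∈ H ∧ (a', b₁) ∈ H)).card : ℝ) < τ
          then (1 : ℝ) else 0)
        = ∑ a ∈ Abar, ∑ a' ∈ Abar, ∑ b ∈ A,
          (if ((a, b) ∈ H ∧ (a', b) ∈ H) ∧
              ((A.filter (fun b₁ => (a, b₁) ∈ H ∧ (a', b₁) ∈ H)).card : ℝ) < τ
          then (1 : ℝ) else 0) := by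
      rw [Finset.sum_comm]
      exact Finset.sum_congr rfl fun a _ => Finset.sum_comm
    have e2 : ∀ a a' : G, ∑ b ∈ A,
          (if ((a, b) ∈ H ∧ (a', b) ∈ H) ∧
              ((A.filter (fun b₁ => (a, b₁) ∈ H ∧ (a', b₁) ∈ H)).card : ℝ) < τ
          then (1 : ℝ) else 0) ≤ τ := by
      intro a a'
      by_cases hbad : ((A.filter (fun b₁ => (a, b₁) ∈ H ∧ (a', b₁) ∈ H)).card : ℝ) < τ
      · have e3 : ∑ b ∈ A,
            (if ((a, b) ∈ H ∧ (a', b) ∈ H) ∧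
                ((A.filter (fun b₁ => (a, b₁) ∈ H ∧ (a', b₁) ∈ H)).card : ℝ) < τ
            then (1 : ℝ) else 0)
            = ((A.filter (fun b => (a, b) ∈ H ∧ (a', b) ∈ H)).card : ℝ) := by
          calc ∑ b ∈ A,
              (if ((a, b) ∈ H ∧ (a', b) ∈ H) ∧
                  ((A.filter (fun b₁ => (a, b₁) ∈ H ∧ (a', b₁) ∈ H)).card : ℝ) < τ
              then (1 : ℝ) else 0)
              = ∑ b ∈ A, (if (a, b) ∈ H ∧ (a', b) ∈ H then (1 : ℝ) else 0) :=
                Finset.sum_congr rfl fun b _ => if_congr (by tauto) rfl rfl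
            _ = ((A.filter (fun b => (a, b) ∈ H ∧ (a', b) ∈ H)).card : ℝ) :=
                (bsg_cardf _ _).symm
        rw [e3]
        exact hbad.le
      · calc ∑ b ∈ A,
            (if ((a, b) ∈ H ∧ (a', b) ∈ H) ∧
                ((A.filter (fun b₁ => (a, b₁) ∈ H ∧ (a', b₁) ∈ H)).card : ℝ) < τ
            then (1 : ℝ) else 0) = 0 := by
              refine Finset.sum_eq_zero fun b _ => ?_
              rw [if_neg]
              tauto
          _ ≤ τ := hτ0.le
    calc ∑ b ∈ A, ∑ a ∈ Abar.filter (fun a => (a, b) ∈ H),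
          ((Abar.filter (fun a' => (a', b) ∈ H ∧
              ((A.filter (fun b₁ => (a, b₁) ∈ H ∧ (a', b₁) ∈ H)).card : ℝ) < τ)).card : ℝ)
        = ∑ a ∈ Abar, ∑ a' ∈ Abar, ∑ b ∈ A,
          (if ((a, b) ∈ H ∧ (a', b) ∈ H) ∧
              ((A.filter (fun b₁ => (a, b₁) ∈ H ∧ (a', b₁) ∈ H)).card : ℝ) < τ
          then (1 : ℝ) else 0) := by
          rw [← e1]
          exact Finset.sum_congr rfl fun b _ => hbp_step1 b
      _ ≤ ∑ a ∈ Abar, ∑ a' ∈ Abar, τ :=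
          Finset.sum_le_sum fun a _ => Finset.sum_le_sum fun a' _ => e2 a a'
      _ ≤ τ * n ^ 2 := by
          rw [Finset.sum_const, Finset.sum_const, nsmul_eq_mul, nsmul_eq_mul]
          have hc1 : ((Abar.card : ℝ)) * (Abar.card : ℝ) ≤ n * n :=
            mul_le_mul hAbarn hAbarn (Nat.cast_nonneg _) hn0.le
          nlinarith [mul_le_mul_of_nonneg_left hc1 hτ0.le]
  -- Cauchy–Schwarz
  have hCS : c ^ 2 * n ^ 3 / 4
      ≤ ∑ b ∈ A, ((Abar.filter (fun a => (a, b) ∈ H)).card : ℝ) ^ 2 := by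
    have h1 := sq_sum_le_card_mul_sum_sq (s := A)
      (f := fun b => ((Abar.filter (fun a => (a, b) ∈ H)).card : ℝ))
    have h2 : (c * n ^ 2 / 2) ^ 2
        ≤ (∑ b ∈ A, ((Abar.filter (fun a => (a, b) ∈ H)).card : ℝ)) ^ 2 := by
      exact pow_le_pow_left₀ (by positivity) hUsum 2
    rw [← hn] at h1
    nlinarith [h1, h2, hn0]
  -- choose a good vertex b
  have hFex : ∃ b ∈ A, c ^ 3 * n ^ 2 / 8
      ≤ c * ((Abar.filter (fun a => (a, b) ∈ H)).card : ℝ) ^ 2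
        - 32 * ∑ a ∈ Abar.filter (fun a => (a, b) ∈ H),
            ((Abar.filter (fun a' => (a', b) ∈ H ∧
              ((A.filter (fun b₁ => (a, b₁) ∈ H ∧ (a', b₁) ∈ H)).card : ℝ) < τ)).card : ℝ) := by
    apply Finset.exists_le_of_sum_le hA
    rw [Finset.sum_const, nsmul_eq_mul]
    rw [Finset.sum_sub_distrib, ← Finset.mul_sum, ← Finset.mul_sum]
    have hbp_sum2 := le_trans hbp_sum (le_of_eq (by rw [hτdef]))
    rw [← hn]
    nlinarith [hbp_sum2, mul_le_mul_of_nonneg_left hCS hc.le]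
  obtain ⟨b, hbA, hFb⟩ := hFex
  set U0 : Finset G := Abar.filter (fun a => (a, b) ∈ H) with hU0def
  have hU0Abar : U0 ⊆ Abar := filter_subset _ _
  have hbp_nonneg : (0:ℝ) ≤ ∑ a ∈ U0,
      ((Abar.filter (fun a' => (a', b) ∈ H ∧
        ((A.filter (fun b₁ => (a, b₁) ∈ H ∧ (a', b₁) ∈ H)).card : ℝ) < τ)).card : ℝ) :=
    Finset.sum_nonneg fun _ _ => Nat.cast_nonneg _
  have hu2 : c ^ 2 * n ^ 2 / 8 ≤ ((U0.card : ℝ)) ^ 2 := by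
    nlinarith [hFb, hbp_nonneg, hc]
  have hu0 : (0:ℝ) ≤ (U0.card : ℝ) := Nat.cast_nonneg _
  have hu : c * n / 4 ≤ (U0.card : ℝ) := by
    nlinarith [hu2, hu0, mul_pos hc hn0]
  have hupos : (0:ℝ) < (U0.card : ℝ) := lt_of_lt_of_le (by positivity) hu
  have hbpb : 32 * (∑ a ∈ U0,
      ((Abar.filter (fun a' => (a', b) ∈ H ∧
        ((A.filter (fun b₁ => (a, b₁) ∈ H ∧ (a', b₁) ∈ H)).card : ℝ) < τ)).card : ℝ))
      ≤ c * ((U0.card : ℝ)) ^ 2 := by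
    have : (0:ℝ) ≤ c ^ 3 * n ^ 2 / 8 := by positivity
    linarith [hFb, this]
  -- rewrite the inner filters as filters of U0
  have hUfilter : ∀ x : G,
      U0.filter (fun a' => ((A.filter (fun b₁ => (x, b₁) ∈ H ∧ (a', b₁) ∈ H)).card : ℝ) < τ)
        = Abar.filter (fun a' => (a', b) ∈ H ∧
            ((A.filter (fun b₁ => (x, b₁) ∈ H ∧ (a', b₁) ∈ H)).card : ℝ) < τ) := by
    intro x
    rw [hU0def, Finset.filter_filter]
  -- the subset A' of U0 with small bad count
  set A1 : Finset G := U0.filter (fun x =>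
      ((U0.filter (fun a' =>
        ((A.filter (fun b₁ => (x, b₁) ∈ H ∧ (a', b₁) ∈ H)).card : ℝ) < τ)).card : ℝ)
      ≤ c * (U0.card : ℝ) / 16) with hA1def
  have hA1U0 : A1 ⊆ U0 := filter_subset _ _
  have hA1mem : ∀ x ∈ A1,
      ((U0.filter (fun a' =>
        ((A.filter (fun b₁ => (x, b₁) ∈ H ∧ (a', b₁) ∈ H)).card : ℝ) < τ)).card : ℝ)
      ≤ c * (U0.card : ℝ) / 16 := fun x hx => (mem_filter.1 hx).2
  clear_value A1 U0
  have hA1card : (U0.card : ℝ) / 2 ≤ (A1.card : ℝ) := by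
    have hbc_sum : ∑ x ∈ U0,
        ((U0.filter (fun a' =>
          ((A.filter (fun b₁ => (x, b₁) ∈ H ∧ (a', b₁) ∈ H)).card : ℝ) < τ)).card : ℝ)
        = ∑ a ∈ U0,
        ((Abar.filter (fun a' => (a', b) ∈ H ∧
          ((A.filter (fun b₁ => (a, b₁) ∈ H ∧ (a', b₁) ∈ H)).card : ℝ) < τ)).card : ℝ) :=
      Finset.sum_congr rfl fun x _ => by rw [hUfilter x]
    have hW1 := Finset.card_nsmul_le_sum
      (U0.filter (fun x => ¬ ((U0.filter (fun a' =>
        ((A.filter (fun b₁ => (x, b₁) ∈ H ∧ (a', b₁) ∈ H)).card : ℝ) < τ)).card : ℝ)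
        ≤ c * (U0.card : ℝ) / 16))
      (fun x => ((U0.filter (fun a' =>
        ((A.filter (fun b₁ => (x, b₁) ∈ H ∧ (a', b₁) ∈ H)).card : ℝ) < τ)).card : ℝ))
      (c * (U0.card : ℝ) / 16)
      (fun x hx => le_of_not_ge (mem_filter.1 hx).2)
    rw [nsmul_eq_mul] at hW1
    have hW2 : ∑ x ∈ U0.filter (fun x => ¬ ((U0.filter (fun a' =>
          ((A.filter (fun b₁ => (x, b₁) ∈ H ∧ (a', b₁) ∈ H)).card : ℝ) < τ)).card : ℝ)
          ≤ c * (U0.card : ℝ) / 16),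
        ((U0.filter (fun a' =>
          ((A.filter (fun b₁ => (x, b₁) ∈ H ∧ (a', b₁) ∈ H)).card : ℝ) < τ)).card : ℝ)
        ≤ ∑ x ∈ U0,
        ((U0.filter (fun a' =>
          ((A.filter (fun b₁ => (x, b₁) ∈ H ∧ (a', b₁) ∈ H)).card : ℝ) < τ)).card : ℝ) :=
      Finset.sum_le_sum_of_subset_of_nonneg (filter_subset _ _)
        (fun _ _ _ => Nat.cast_nonneg _)
    have hW3 : ((U0.filter (fun x => ¬ ((U0.filter (fun a' =>
        ((A.filter (fun b₁ => (x, b₁) ∈ H ∧ (a', b₁) ∈ H)).card : ℝ) < τ)).card : ℝ)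
        ≤ c * (U0.card : ℝ) / 16)).card : ℝ) ≤ (U0.card : ℝ) / 2 := by
      rw [hbc_sum] at hW2
      nlinarith [hW1, hW2, hbpb, mul_pos hc hupos]
    have hcards := Finset.card_filter_add_card_filter_not (s := U0)
      (p := fun x => ((U0.filter (fun a' =>
        ((A.filter (fun b₁ => (x, b₁) ∈ H ∧ (a', b₁) ∈ H)).card : ℝ) < τ)).card : ℝ)
        ≤ c * (U0.card : ℝ) / 16)
    have hcards' : (A1.card : ℝ) + ((U0.filter (fun x => ¬ ((U0.filter (fun a' =>
        ((A.filter (fun b₁ => (x, b₁) ∈ H ∧ (a', b₁) ∈ H)).card : ℝ) < τ)).card : ℝ)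
        ≤ c * (U0.card : ℝ) / 16)).card : ℝ) = (U0.card : ℝ) := by
      rw [hA1def]
      exact_mod_cast congrArg (Nat.cast (R := ℝ)) hcards
    linarith [hW3, hcards']
  have hA1n : c * n / 8 ≤ (A1.card : ℝ) := by linarith [hA1card, hu]
  have hA1pos : (0:ℝ) < (A1.card : ℝ) := lt_of_lt_of_le (by positivity) hA1n
  have hA1A : A1 ⊆ A := fun x hx => hAbarA (hU0Abar (hA1U0 hx))
  -- the popular set B1 on the other side
  have hdegA1sum : ∑ b' ∈ A, ((A1.filter (fun x => (x, b') ∈ H)).card : ℝ)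
      = ∑ x ∈ A1, ((A.filter (fun b₁ => (x, b₁) ∈ H)).card : ℝ) :=
    bsg_swap A1 A (fun x y => (x, y) ∈ H)
  have hdeg_lb : (A1.card : ℝ) * (c * n / 2)
      ≤ ∑ x ∈ A1, ((A.filter (fun b₁ => (x, b₁) ∈ H)).card : ℝ) := by
    have h := Finset.card_nsmul_le_sum A1
      (fun x => ((A.filter (fun b₁ => (x, b₁) ∈ H)).card : ℝ)) (c * n / 2)
      (fun x hx => hAbar_deg x (hU0Abar (hA1U0 hx)))
    rwa [nsmul_eq_mul] at h
  set B1 : Finset G := A.filter (fun b' =>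
      c * (A1.card : ℝ) / 4 ≤ ((A1.filter (fun x => (x, b') ∈ H)).card : ℝ)) with hB1def
  have hB1A : B1 ⊆ A := filter_subset _ _
  have hB1mem : ∀ y ∈ B1, y ∈ A ∧
      c * (A1.card : ℝ) / 4 ≤ ((A1.filter (fun x => (x, y) ∈ H)).card : ℝ) :=
    fun y hy => mem_filter.1 hy
  clear_value B1
  have hB1card : c * n / 4 ≤ (B1.card : ℝ) := by
    have hsplit := Finset.sum_filter_add_sum_filter_not A
      (fun b' => c * (A1.card : ℝ) / 4 ≤ ((A1.filter (fun x => (x, b') ∈ H)).card : ℝ))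
      (fun b' => ((A1.filter (fun x => (x, b') ∈ H)).card : ℝ))
    have h1 : ∑ b' ∈ B1, ((A1.filter (fun x => (x, b') ∈ H)).card : ℝ)
        ≤ (B1.card : ℝ) * (A1.card : ℝ) := by
      have h := Finset.sum_le_card_nsmul B1
        (fun b' => ((A1.filter (fun x => (x, b') ∈ H)).card : ℝ)) ((A1.card : ℝ))
        (fun x _ => by exact_mod_cast Nat.cast_le.mpr (card_filter_le _ _))
      rwa [nsmul_eq_mul] at h
    have h2 : ∑ b' ∈ A.filter (fun b' =>
          ¬ c * (A1.card : ℝ) / 4 ≤ ((A1.filter (fun x => (x, b') ∈ H)).card : ℝ)),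
        ((A1.filter (fun x => (x, b') ∈ H)).card : ℝ) ≤ n * (c * (A1.card : ℝ) / 4) := by
      have h := Finset.sum_le_card_nsmul (A.filter (fun b' =>
          ¬ c * (A1.card : ℝ) / 4 ≤ ((A1.filter (fun x => (x, b') ∈ H)).card : ℝ)))
        (fun b' => ((A1.filter (fun x => (x, b') ∈ H)).card : ℝ)) (c * (A1.card : ℝ) / 4)
        (fun x hx => le_of_not_ge (mem_filter.1 hx).2)
      rw [nsmul_eq_mul] at h
      refine h.trans ?_
      have h3 : ((A.filter (fun b' =>
          ¬ c * (A1.card : ℝ) / 4 ≤ ((A1.filter (fun x => (x, b') ∈ H)).card : ℝ))).card : ℝ)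
          ≤ n := by
        rw [hn]; exact_mod_cast Nat.cast_le.mpr (card_le_card (filter_subset _ _))
      nlinarith [h3, mul_pos hc hA1pos]
    rw [hdegA1sum] at hsplit
    rw [← hB1def] at hsplit
    have htot : (A1.card : ℝ) * (c * n / 2)
        ≤ (B1.card : ℝ) * (A1.card : ℝ) + n * (c * (A1.card : ℝ) / 4) := by
      linarith [hdeg_lb, hsplit, h1, h2]
    nlinarith [htot, hA1pos]
  -- the difference set D
  set DD : Finset G := H.image (fun p => p.1 - p.2) with hDDdef
  have hDDmem : ∀ p ∈ H, p.1 - p.2 ∈ DD := fun p hp => mem_image_of_mem _ hp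
  clear_value DD
  -- bounding |A1 - B1|
  have hfib : ∀ d ∈ A1 - B1, c ^ 5 * n ^ 2 / 2 ^ 14
      ≤ (((DD ×ˢ DD ×ˢ DD).filter (fun t => t.1 - t.2.1 + t.2.2 = d)).card : ℝ) := by
    intro d hd
    obtain ⟨x, hx, y, hy, hxy⟩ := mem_sub.1 hd
    have hyA := (hB1mem y hy).1
    have hydeg : c * (A1.card : ℝ) / 4 ≤ ((A1.filter (fun z => (z, y) ∈ H)).card : ℝ) :=
      (hB1mem y hy).2
    have hxU0 : x ∈ U0 := hA1U0 hx
    have hxbc : ((U0.filter (fun a' =>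
        ((A.filter (fun b₁ => (x, b₁) ∈ H ∧ (a', b₁) ∈ H)).card : ℝ) < τ)).card : ℝ)
        ≤ c * (U0.card : ℝ) / 16 := hA1mem x hx
    -- the set of good common neighbours
    have hval1 := bsg_filter_and A1 (fun z => (z, y) ∈ H)
      (fun z => τ ≤ ((A.filter (fun b₁ => (x, b₁) ∈ H ∧ (z, b₁) ∈ H)).card : ℝ))
    have hval2 : (A1.filter (fun z =>
        ¬ τ ≤ ((A.filter (fun b₁ => (x, b₁) ∈ H ∧ (z, b₁) ∈ H)).card : ℝ))).card
        ≤ (U0.filter (fun a' =>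
        ((A.filter (fun b₁ => (x, b₁) ∈ H ∧ (a', b₁) ∈ H)).card : ℝ) < τ)).card := by
      refine card_le_card ?_
      intro z hz
      rcases mem_filter.1 hz with ⟨hz1, hz2⟩
      exact mem_filter.2 ⟨hA1U0 hz1, not_le.1 hz2⟩
    have hvalcard : c ^ 2 * n / 64 ≤ ((A1.filter (fun z => (z, y) ∈ H ∧
        τ ≤ ((A.filter (fun b₁ => (x, b₁) ∈ H ∧ (z, b₁) ∈ H)).card : ℝ))).card : ℝ) := by
      have c1 : ((A1.filter (fun z => (z, y) ∈ H)).card : ℝ)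
          ≤ ((A1.filter (fun z => (z, y) ∈ H ∧
            τ ≤ ((A.filter (fun b₁ => (x, b₁) ∈ H ∧ (z, b₁) ∈ H)).card : ℝ))).card : ℝ)
            + ((A1.filter (fun z =>
            ¬ τ ≤ ((A.filter (fun b₁ => (x, b₁) ∈ H ∧ (z, b₁) ∈ H)).card : ℝ))).card : ℝ) := by
        exact_mod_cast Nat.cast_le.mpr hval1
      have c2 : ((A1.filter (fun z =>
          ¬ τ ≤ ((A.filter (fun b₁ => (x, b₁) ∈ H ∧ (z, b₁) ∈ H)).card : ℝ))).card : ℝ)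
          ≤ c * (U0.card : ℝ) / 16 :=
        le_trans (by exact_mod_cast Nat.cast_le.mpr hval2) hxbc
      -- |U0| ≤ 2|A1| and |A1| ≥ c n/8
      linarith [hydeg, c1, c2, hA1card, hA1n, mul_le_mul_of_nonneg_left hA1card hc.le,
        mul_le_mul_of_nonneg_left hA1n hc.le]
    -- count paths
    have hQ : ((A1.filter (fun z => (z, y) ∈ H ∧
        τ ≤ ((A.filter (fun b₁ => (x, b₁) ∈ H ∧ (z, b₁) ∈ H)).card : ℝ))).card : ℝ) * τ
        ≤ ((((A1.filter (fun z => (z, y) ∈ H ∧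
          τ ≤ ((A.filter (fun b₁ => (x, b₁) ∈ H ∧ (z, b₁) ∈ H)).card : ℝ))) ×ˢ A).filter
          (fun q => (x, q.2) ∈ H ∧ (q.1, q.2) ∈ H)).card : ℝ) := by
      refine le_trans ?_
        (le_of_eq (bsg_cardf2 _ _ (fun z b₁ => (x, b₁) ∈ H ∧ (z, b₁) ∈ H)).symm)
      have e1 : ∀ z ∈ A1.filter (fun z => (z, y) ∈ H ∧
          τ ≤ ((A.filter (fun b₁ => (x, b₁) ∈ H ∧ (z, b₁) ∈ H)).card : ℝ)),
          τ ≤ ∑ b₁ ∈ A, if (x, b₁) ∈ H ∧ (z, b₁) ∈ H then (1 : ℝ) else 0 := by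
        intro z hz
        rw [← bsg_cardf]
        exact (mem_filter.1 hz).2.2
      have h := Finset.card_nsmul_le_sum (A1.filter (fun z => (z, y) ∈ H ∧
          τ ≤ ((A.filter (fun b₁ => (x, b₁) ∈ H ∧ (z, b₁) ∈ H)).card : ℝ)))
        (fun z => ∑ b₁ ∈ A, if (x, b₁) ∈ H ∧ (z, b₁) ∈ H then (1 : ℝ) else 0) τ e1
      rwa [nsmul_eq_mul] at h
    have hinj : (((A1.filter (fun z => (z, y) ∈ H ∧
          τ ≤ ((A.filter (fun b₁ => (x, b₁) ∈ H ∧ (z, b₁) ∈ H)).card : ℝ))) ×ˢ A).filter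
          (fun q => (x, q.2) ∈ H ∧ (q.1, q.2) ∈ H)).card
        ≤ ((DD ×ˢ DD ×ˢ DD).filter (fun t => t.1 - t.2.1 + t.2.2 = d)).card := by
      refine card_le_card_of_injOn (fun q => (x - q.2, (q.1 - q.2, q.1 - y))) ?_ ?_
      · intro q hq
        rcases mem_filter.1 hq with ⟨hq1, hq2, hq3⟩
        rcases mem_product.1 hq1 with ⟨hq4, -⟩
        rcases mem_filter.1 hq4 with ⟨-, hq5, -⟩
        refine mem_filter.2 ⟨?_, ?_⟩
        · refine mem_product.2 ⟨?_, mem_product.2 ⟨?_, ?_⟩⟩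
          · exact hDDmem _ hq2
          · exact hDDmem _ hq3
          · exact hDDmem _ hq5
        · rw [← hxy]; dsimp only; abel
      · intro q hq q' hq' heq
        have e1 : x - q.2 = x - q'.2 := congrArg Prod.fst heq
        have e2 : q.2 = q'.2 := by
          have := sub_right_injective e1
          exact this
        have e3 : q.1 - q.2 = q'.1 - q'.2 := congrArg (fun t => t.2.1) heq
        rw [e2] at e3
        have e4 : q.1 = q'.1 := by
          have := sub_left_injective e3
          exact this
        exact Prod.ext e4 e2
    have hfib1 : ((A1.filter (fun z => (z, y) ∈ H ∧
        τ ≤ ((A.filter (fun b₁ => (x, b₁) ∈ H ∧ (z, b₁) ∈ H)).card : ℝ))).card : ℝ) * τ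
        ≤ (((DD ×ˢ DD ×ˢ DD).filter (fun t => t.1 - t.2.1 + t.2.2 = d)).card : ℝ) :=
      le_trans hQ (by exact_mod_cast Nat.cast_le.mpr hinj)
    refine le_trans ?_ hfib1
    have hτval : c ^ 3 * n / 256 ≤ τ := le_of_eq hτdef.symm
    calc c ^ 5 * n ^ 2 / 2 ^ 14 = (c ^ 2 * n / 64) * (c ^ 3 * n / 256) := by ring
      _ ≤ _ := by
        refine mul_le_mul hvalcard hτval (by positivity) ?_
        exact le_trans (by positivity) hvalcard
  have hSbound : ((A1 - B1).card : ℝ) * (c ^ 5 * n ^ 2 / 2 ^ 14) ≤ (c' * n) ^ 3 := by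
    have h1 := Finset.card_nsmul_le_sum (A1 - B1)
      (fun d => (((DD ×ˢ DD ×ˢ DD).filter (fun t => t.1 - t.2.1 + t.2.2 = d)).card : ℝ))
      (c ^ 5 * n ^ 2 / 2 ^ 14) hfib
    rw [nsmul_eq_mul] at h1
    have h2 := bsg_fiber_sum (DD ×ˢ DD ×ˢ DD) (A1 - B1) (fun t => t.1 - t.2.1 + t.2.2)
    have h3 : (((DD ×ˢ DD ×ˢ DD).card : ℕ) : ℝ) = ((DD.card : ℝ)) ^ 3 := by
      rw [card_product, card_product]
      push_cast
      ring
    have h4 : ((DD.card : ℝ)) ^ 3 ≤ (c' * n) ^ 3 := by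
      refine pow_le_pow_left₀ (Nat.cast_nonneg _) ?_ 3
      exact hDcard
    rw [mul_comm] at h1
    calc ((A1 - B1).card : ℝ) * (c ^ 5 * n ^ 2 / 2 ^ 14)
        = (c ^ 5 * n ^ 2 / 2 ^ 14) * ((A1 - B1).card : ℝ) := by ring
      _ ≤ ∑ d ∈ A1 - B1,
          (((DD ×ˢ DD ×ˢ DD).filter (fun t => t.1 - t.2.1 + t.2.2 = d)).card : ℝ) := by
          rw [mul_comm] at h1; rw [mul_comm]; exact h1
      _ ≤ (((DD ×ˢ DD ×ˢ DD).card : ℕ) : ℝ) := h2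
      _ = ((DD.card : ℝ)) ^ 3 := h3
      _ ≤ (c' * n) ^ 3 := h4
  -- conclusion via the Ruzsa triangle inequality
  refine ⟨A1, hA1A, ?_, ?_⟩
  · calc c / 8 * n = c * n / 8 := by ring
      _ ≤ _ := hA1n
  · have hruz := Finset.ruzsa_triangle_inequality_sub_sub_sub A1 B1 A1
    have hruzR : ((A1 - A1).card : ℝ) * (B1.card : ℝ)
        ≤ ((A1 - B1).card : ℝ) * ((A1 - B1).card : ℝ) := by
      exact_mod_cast hruz
    obtain ⟨X, hX⟩ : ∃ X : ℝ, ((A1 - A1).card : ℝ) = X := ⟨_, rfl⟩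
    obtain ⟨Y, hY⟩ : ∃ Y : ℝ, ((A1 - B1).card : ℝ) = Y := ⟨_, rfl⟩
    rw [hX, hY] at hruzR
    rw [hY] at hSbound
    rw [hX]
    have hX0 : 0 ≤ X := hX ▸ Nat.cast_nonneg _
    have hY0 : 0 ≤ Y := hY ▸ Nat.cast_nonneg _
    have k1 : X * (c * n / 4) ≤ Y * Y :=
      le_trans (mul_le_mul_of_nonneg_left hB1card hX0) hruzR
    have k2 : Y * (c ^ 5 * n ^ 2 / 2 ^ 14) ≤ c' ^ 3 * n ^ 3 := by
      calc Y * (c ^ 5 * n ^ 2 / 2 ^ 14) ≤ (c' * n) ^ 3 := hSbound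
        _ = c' ^ 3 * n ^ 3 := by ring
    have k2sq : (Y * (c ^ 5 * n ^ 2 / 2 ^ 14)) * (Y * (c ^ 5 * n ^ 2 / 2 ^ 14))
        ≤ (c' ^ 3 * n ^ 3) * (c' ^ 3 * n ^ 3) :=
      mul_le_mul k2 k2 (mul_nonneg hY0 (by positivity))
        (le_of_lt (mul_pos (pow_pos hc' 3) (pow_pos hn0 3)))
    have k3 : X * (c * n / 4) * ((c ^ 5 * n ^ 2 / 2 ^ 14) * (c ^ 5 * n ^ 2 / 2 ^ 14))
        ≤ (c' ^ 3 * n ^ 3) * (c' ^ 3 * n ^ 3) := by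
      calc X * (c * n / 4) * ((c ^ 5 * n ^ 2 / 2 ^ 14) * (c ^ 5 * n ^ 2 / 2 ^ 14))
          ≤ (Y * Y) * ((c ^ 5 * n ^ 2 / 2 ^ 14) * (c ^ 5 * n ^ 2 / 2 ^ 14)) :=
            mul_le_mul_of_nonneg_right k1 (by positivity)
        _ = (Y * (c ^ 5 * n ^ 2 / 2 ^ 14)) * (Y * (c ^ 5 * n ^ 2 / 2 ^ 14)) := by ring
        _ ≤ _ := k2sq
    have k4 : X * c ^ 11 * n ^ 5 ≤ 2 ^ 30 * c' ^ 6 * n ^ 6 := by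
      calc X * c ^ 11 * n ^ 5
          = 2 ^ 30 * (X * (c * n / 4) * ((c ^ 5 * n ^ 2 / 2 ^ 14) * (c ^ 5 * n ^ 2 / 2 ^ 14))) := by
            ring
        _ ≤ 2 ^ 30 * ((c' ^ 3 * n ^ 3) * (c' ^ 3 * n ^ 3)) := by linarith [k3]
        _ = 2 ^ 30 * c' ^ 6 * n ^ 6 := by ring
    have hcn : c * n ≤ 8 * (A1.card : ℝ) := by linarith [hA1n]
    have k5 : X * c ^ 12 * n ^ 5 ≤ 2 ^ 30 * c' ^ 6 * n ^ 5 * (c * n) := by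
      calc X * c ^ 12 * n ^ 5 = (X * c ^ 11 * n ^ 5) * c := by ring
        _ ≤ (2 ^ 30 * c' ^ 6 * n ^ 6) * c := mul_le_mul_of_nonneg_right k4 hc.le
        _ = 2 ^ 30 * c' ^ 6 * n ^ 5 * (c * n) := by ring
    have k6 : X * c ^ 12 * n ^ 5 ≤ 2 ^ 30 * c' ^ 6 * n ^ 5 * (8 * (A1.card : ℝ)) :=
      le_trans k5 (mul_le_mul_of_nonneg_left hcn (by positivity))
    have k7 : X * c ^ 12 ≤ 2 ^ 33 * c' ^ 6 * (A1.card : ℝ) := by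
      have n5 : (0:ℝ) < n ^ 5 := by positivity
      have k6' : (X * c ^ 12) * n ^ 5 ≤ (2 ^ 33 * c' ^ 6 * (A1.card : ℝ)) * n ^ 5 := by
        calc (X * c ^ 12) * n ^ 5 = X * c ^ 12 * n ^ 5 := by ring
          _ ≤ 2 ^ 30 * c' ^ 6 * n ^ 5 * (8 * (A1.card : ℝ)) := k6
          _ = (2 ^ 33 * c' ^ 6 * (A1.card : ℝ)) * n ^ 5 := by ring
      exact le_of_mul_le_mul_right k6' n5
    rw [div_mul_eq_mul_div, le_div_iff₀ (by positivity : (0:ℝ) < c ^ 12)]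
    calc X * c ^ 12 ≤ 2 ^ 33 * c' ^ 6 * (A1.card : ℝ) := k7
      _ = 2 ^ 33 * c' ^ 6 * (A1.card : ℝ) := rfl
end
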